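/- Let μ be a measure on a measurable space Ω, let c ≥ 0, and let f, f' : Ω → ℝ be measurable with |f(ω) − f'(ω)| ≤ c for every ω ∈ Ω. Then (e^{−c}/8)·∫_Ω (f − f')² e^{f'} dμ ≤ (1/2)·∫_Ω (e^{f/2} − e^{f'/2})² dμ. -/

import Mathlib

open MeasureTheory
open scoped ENNReal

lemma key_exp (x c : ℝ) (hc : 0 ≤ c) (hx : |x| ≤ c) :
    Real.exp (-c) * x ^ 2 / 4 ≤ (Real.exp (x / 2) - 1) ^ 2 := by
  have hec : Real.exp (-c) ≤ 1 := Real.exp_le_one_iff.mpr (by linarith)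
  rcases le_or_gt 0 x with h | h
  · have h1 : x / 2 + 1 ≤ Real.exp (x / 2) := Real.add_one_le_exp _
    nlinarith [sq_nonneg x, Real.exp_pos (-c)]
  · have hxc : -c ≤ x := (abs_le.mp hx).1
    have h1 : -x / 2 + 1 ≤ Real.exp (-x / 2) := Real.add_one_le_exp _
    have hu : 0 < Real.exp (x / 2) := Real.exp_pos _
    have huu : Real.exp (x / 2) * Real.exp (-x / 2) = 1 := by
      rw [← Real.exp_add]; ring_nf; exact Real.exp_zero
    have h2 : 1 - Real.exp (x / 2) ≥ -x / 2 * Real.exp (x / 2) := by nlinarith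
    have h3 : Real.exp (-c) ≤ Real.exp x := Real.exp_le_exp.mpr hxc
    have h4 : Real.exp (x / 2) * Real.exp (x / 2) = Real.exp x := by
      rw [← Real.exp_add]; ring_nf
    have h5 : (-x / 2 * Real.exp (x / 2)) ^ 2 ≤ (1 - Real.exp (x / 2)) ^ 2 := by
      have hn : 0 ≤ -x / 2 * Real.exp (x / 2) := by nlinarith
      nlinarith
    nlinarith [sq_nonneg x]

/-- Bounded-difference version of Lemma A.1: if `|f - f'| ≤ c` pointwise, then
`(e^{-c}/8) ∫ (f - f')² e^{f'} dμ ≤ (1/2) ∫ (e^{f/2} - e^{f'/2})² dμ`. -/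
theorem stmt_14 {Ω : Type*} [MeasurableSpace Ω] (μ : Measure Ω) (c : ℝ) (hc : 0 ≤ c)
    (f f' : Ω → ℝ) (hf : Measurable f) (hf' : Measurable f')
    (hdiff : ∀ ω, |f ω - f' ω| ≤ c) :
    (ENNReal.ofReal (Real.exp (-c)) / 8) *
        ∫⁻ ω, ENNReal.ofReal ((f ω - f' ω) ^ 2 * Real.exp (f' ω)) ∂μ ≤
      (1 / 2 : ℝ≥0∞) *
        ∫⁻ ω, ENNReal.ofReal ((Real.exp (f ω / 2) - Real.exp (f' ω / 2)) ^ 2) ∂μ := by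
  have h8 : (8 : ℝ≥0∞) = ENNReal.ofReal 8 := by norm_num
  have h2 : (1 / 2 : ℝ≥0∞) = ENNReal.ofReal (1 / 2) := by
    rw [ENNReal.ofReal_div_of_pos (by norm_num)]; norm_num
  rw [h8, ← ENNReal.ofReal_div_of_pos (by norm_num), h2,
    ← MeasureTheory.lintegral_const_mul' _ _ ENNReal.ofReal_ne_top,
    ← MeasureTheory.lintegral_const_mul' _ _ ENNReal.ofReal_ne_top]
  refine lintegral_mono fun ω => ?_
  rw [← ENNReal.ofReal_mul (by positivity), ← ENNReal.ofReal_mul (by norm_num)]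
  refine ENNReal.ofReal_le_ofReal ?_
  set x := f ω - f' ω with hx
  have hkey := key_exp x c hc (hdiff ω)
  have hsplit : (Real.exp (f ω / 2) - Real.exp (f' ω / 2)) ^ 2
      = Real.exp (f' ω) * (Real.exp (x / 2) - 1) ^ 2 := by
    have : Real.exp (f ω / 2) = Real.exp (f' ω / 2) * Real.exp (x / 2) := by
      rw [← Real.exp_add, hx]; ring_nf
    rw [this]
    have : Real.exp (f' ω / 2) * Real.exp (f' ω / 2) = Real.exp (f' ω) := by
      rw [← Real.exp_add]; ring_nf
    nlinarith [this]
  rw [hsplit]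
  have hb : 0 < Real.exp (f' ω) := Real.exp_pos _
  nlinarith [mul_le_mul_of_nonneg_left hkey hb.le]
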